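/- Let A be a finite-dimensional split commutative semisimple algebra over ℂ with a distinguished basis {b_i} and a Frobenius functional λ such that {b_i} is orthonormal for the Hermitian form ⟨a,c⟩ = λ(a c*), where (·)* is a conjugate-linear algebra anti-involution permuting the basis {b_i}. For characters φ, φ' of A, with α_φ = Σ_i φ(b_i) b_i*, one has the orthogonality relation ⟨α_φ, α_{φ'}⟩ = δ_{φφ'} · f_φ, where f_φ = φ(α_φ). -/

import Mathlib

open scoped BigOperators

/-- Orthogonality of characters in a finite-dimensional split
commutative semisimple Frobenius ∗-algebra over ℂ with an orthonormal
distinguished basis: `⟨α_φ, α_{φ'}⟩ = δ_{φφ'} f_φ` where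
`α_φ = ∑ i, φ(b i) • (b i)*` and `f_φ = φ(α_φ)`. -/
theorem stmt2 {A : Type*} [CommRing A] [Algebra ℂ A] [FiniteDimensional ℂ A]
    {ι : Type*} [Fintype ι] [DecidableEq ι] [DecidableEq (A →ₐ[ℂ] ℂ)]
    (split : A ≃ₐ[ℂ] (ι → ℂ))
    (lam : A →ₗ[ℂ] ℂ)
    (hnd : ∀ a : A, (∀ c : A, lam (a * c) = 0) → a = 0)
    (st : A → A)
    (hst_add : ∀ a c : A, st (a + c) = st a + st c)
    (hst_smul : ∀ (z : ℂ) (a : A), st (z • a) = (starRingEnd ℂ z) • st a)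
    (hst_mul : ∀ a c : A, st (a * c) = st c * st a)
    (hst_invol : ∀ a : A, st (st a) = a)
    (b : ι → A) (hb : Module.Basis ι ℂ A) (hbe : ∀ i, hb i = b i)
    (σ : ι ≃ ι) (hstb : ∀ i, st (b i) = b (σ i))
    (horthonormal : ∀ i j, lam (b i * st (b j)) = if i = j then 1 else 0)
    (hposdef : ∀ a : A, a ≠ 0 → ∃ r : ℝ, 0 < r ∧ lam (a * st a) = (r : ℂ))
    (hchar_st : ∀ (ψ : A →ₐ[ℂ] ℂ) (a : A), ψ (st a) = starRingEnd ℂ (ψ a))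
    (φ φ' : A →ₐ[ℂ] ℂ) :
    lam ((∑ i, φ (b i) • st (b i)) * st (∑ i, φ' (b i) • st (b i))) =
      if φ = φ' then φ (∑ i, φ (b i) • st (b i)) else 0 := by
  classical
  have hbinj : Function.Injective b := by
    intro i j h
    exact hb.injective (by rw [hbe, hbe, h])
  have hσ : ∀ j, σ (σ j) = j := by
    intro j
    apply hbinj
    rw [← hstb, ← hstb, hst_invol]
  -- coefficient lemma
  have hcoef : ∀ (x : A) (j : ι), lam (x * st (b j)) = hb.repr x j := by
    intro x j
    conv_lhs => rw [← hb.sum_repr x]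
    rw [Finset.sum_mul, map_sum]
    simp only [hbe, smul_mul_assoc, map_smul, smul_eq_mul, horthonormal]
    simp
  have hrepr : ∀ x : A, x = ∑ j, lam (x * st (b j)) • b j := by
    intro x
    conv_lhs => rw [← hb.sum_repr x]
    simp only [hcoef, hbe]
  have hrepr2 : ∀ x : A, x = ∑ j, lam (x * b j) • st (b j) := by
    intro x
    have h1 : ∀ j, lam (x * b j) • st (b j)
        = lam (x * st (b (σ j))) • b (σ j) := by
      intro j
      rw [hstb j, hstb (σ j), hσ j]
    calc x = ∑ j, lam (x * st (b j)) • b j := hrepr x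
      _ = ∑ j, lam (x * st (b (σ j))) • b (σ j) :=
        (Equiv.sum_comp σ (fun j => lam (x * st (b j)) • b j)).symm
      _ = ∑ j, lam (x * b j) • st (b j) := by
        exact Finset.sum_congr rfl fun j _ => (h1 j).symm
  set S : ℂ := ∑ i, φ (b i) * φ' (st (b i)) with hS
  -- key: φ a * S = φ' a * S for all a
  have hkey : ∀ a : A, φ a * S = φ' a * S := by
    intro a
    have hL : φ a * S = ∑ i, ∑ j, lam (a * b i * st (b j)) * (φ (b j) * φ' (st (b i))) := by
      rw [hS, Finset.mul_sum]
      refine Finset.sum_congr rfl fun i _ => ?_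
      have : φ a * (φ (b i) * φ' (st (b i))) = φ (a * b i) * φ' (st (b i)) := by
        rw [map_mul]; ring
      rw [this]
      conv_lhs => rw [hrepr (a * b i)]
      rw [map_sum, Finset.sum_mul]
      refine Finset.sum_congr rfl fun j _ => ?_
      rw [map_smul]
      simp [mul_assoc]
    have hR : φ' a * S = ∑ i, ∑ j, lam (st (b i) * a * b j) * (φ (b i) * φ' (st (b j))) := by
      rw [hS, Finset.mul_sum]
      refine Finset.sum_congr rfl fun i _ => ?_
      have : φ' a * (φ (b i) * φ' (st (b i))) = φ (b i) * φ' (st (b i) * a) := by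
        rw [map_mul]; ring
      rw [this]
      conv_lhs => rw [hrepr2 (st (b i) * a)]
      rw [map_sum, Finset.mul_sum]
      refine Finset.sum_congr rfl fun j _ => ?_
      rw [map_smul]
      simp [smul_eq_mul]; ring
    rw [hL, hR, Finset.sum_comm]
    refine Finset.sum_congr rfl fun i _ => Finset.sum_congr rfl fun j _ => ?_
    have harg : a * b j * st (b i) = st (b i) * a * b j := by ring
    rw [harg]

  -- st of the alpha element
  have hst0 : st 0 = 0 := by
    have := hst_smul 0 0
    simpa using this
  have hstsum : st (∑ i, φ' (b i) • st (b i)) = ∑ i, (starRingEnd ℂ (φ' (b i))) • b i := by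
    have : st (∑ i, φ' (b i) • st (b i)) = ∑ i, st (φ' (b i) • st (b i)) := by
      let stA : A →+ A := AddMonoidHom.mk' st hst_add
      exact map_sum stA _ _
    rw [this]
    refine Finset.sum_congr rfl fun i _ => ?_
    rw [hst_smul, hst_invol]
  -- compute the LHS of the goal
  have hLHS : lam ((∑ i, φ (b i) • st (b i)) * st (∑ i, φ' (b i) • st (b i))) = S := by
    rw [hstsum, Finset.sum_mul_sum, map_sum]
    rw [hS]
    refine Finset.sum_congr rfl fun i _ => ?_
    rw [map_sum]
    rw [Finset.sum_eq_single i]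
    · rw [smul_mul_smul_comm, map_smul, smul_eq_mul]
      have : st (b i) * b i = b i * st (b i) := by ring
      rw [this, horthonormal]
      simp [hchar_st φ' (b i)]
    · intro j _ hji
      rw [smul_mul_smul_comm, map_smul, smul_eq_mul]
      have : st (b i) * b j = b j * st (b i) := by ring
      rw [this, horthonormal]
      simp [hji]
    · intro h
      exact absurd (Finset.mem_univ i) h
  rw [hLHS]
  by_cases h : φ = φ'
  · subst h
    simp only [if_pos rfl]
    rw [map_sum]
    rw [hS]
    refine Finset.sum_congr rfl fun i _ => ?_
    rw [map_smul, smul_eq_mul]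
  · simp only [if_neg h]
    obtain ⟨a, ha⟩ : ∃ a, φ a ≠ φ' a := by
      by_contra hc
      push_neg at hc
      exact h (AlgHom.ext hc)
    have := hkey a
    have h2 : (φ a - φ' a) * S = 0 := by ring_nf; linear_combination this
    rcases mul_eq_zero.mp h2 with h3 | h3
    · exact absurd (sub_eq_zero.mp h3) ha
    · exact h3
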